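/- Let j1, j2, j0, m be natural numbers with m ≥ 1 and j1 + j2 ≥ j0 + m. Then the function f : ℝ² → ℝ defined by f(c1, c2) = c1^{j1} · c2^{j2} / ‖(c1,c2)‖^{j0} for (c1,c2) ≠ 0 and f(0,0) = 0 is of class C^{m−1} on ℝ². -/

import Mathlib

open Real Filter Asymptotics ContinuousLinearMap

noncomputable def gfun (j1 j2 j0 : ℕ) : ℝ × ℝ → ℝ := fun c =>
  if c = 0 then 0 else c.1 ^ j1 * c.2 ^ j2 / (Real.sqrt (c.1 ^ 2 + c.2 ^ 2)) ^ j0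

noncomputable def Dg (j1 j2 j0 : ℕ) (c : ℝ × ℝ) : ℝ × ℝ →L[ℝ] ℝ :=
  ((j1 : ℝ) * gfun (j1 - 1) j2 j0 c - (j0 : ℝ) * gfun (j1 + 1) j2 (j0 + 2) c) •
      ContinuousLinearMap.fst ℝ ℝ ℝ +
    ((j2 : ℝ) * gfun j1 (j2 - 1) j0 c - (j0 : ℝ) * gfun j1 (j2 + 1) (j0 + 2) c) •
      ContinuousLinearMap.snd ℝ ℝ ℝ

lemma gfun_zero (j1 j2 j0 : ℕ) : gfun j1 j2 j0 0 = 0 := if_pos rfl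

lemma qpos {c : ℝ × ℝ} (hc : c ≠ 0) : 0 < c.1 ^ 2 + c.2 ^ 2 := by
  have h1 : c.1 ≠ 0 ∨ c.2 ≠ 0 := by
    by_contra h
    push_neg at h
    exact hc (Prod.ext h.1 h.2)
  rcases h1 with h | h
  · have : 0 < |c.1| := abs_pos.mpr h
    nlinarith [sq_nonneg c.2, sq_abs c.1]
  · have : 0 < |c.2| := abs_pos.mpr h
    nlinarith [sq_nonneg c.1, sq_abs c.2]

lemma abs_fst_le_sqrt (c : ℝ × ℝ) : |c.1| ≤ Real.sqrt (c.1 ^ 2 + c.2 ^ 2) := by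
  rw [← Real.sqrt_sq_eq_abs]
  exact Real.sqrt_le_sqrt (by nlinarith [sq_nonneg c.2])

lemma abs_snd_le_sqrt (c : ℝ × ℝ) : |c.2| ≤ Real.sqrt (c.1 ^ 2 + c.2 ^ 2) := by
  rw [← Real.sqrt_sq_eq_abs]
  exact Real.sqrt_le_sqrt (by nlinarith [sq_nonneg c.1])

lemma norm_le_sqrt (c : ℝ × ℝ) : ‖c‖ ≤ Real.sqrt (c.1 ^ 2 + c.2 ^ 2) := by
  rw [Prod.norm_def]
  exact max_le (by simpa [Real.norm_eq_abs] using abs_fst_le_sqrt c)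
    (by simpa [Real.norm_eq_abs] using abs_snd_le_sqrt c)

lemma gfun_le (j1 j2 j0 : ℕ) (h : j0 ≤ j1 + j2) (c : ℝ × ℝ) :
    |gfun j1 j2 j0 c| ≤ ‖c‖ ^ (j1 + j2 - j0) := by
  by_cases hc : c = 0
  · subst hc
    simp only [gfun_zero, abs_zero]
    positivity
  · have hc0 : 0 < ‖c‖ := norm_pos_iff.mpr hc
    have hr : 0 < Real.sqrt (c.1 ^ 2 + c.2 ^ 2) := lt_of_lt_of_le hc0 (norm_le_sqrt c)
    have hb : |gfun j1 j2 j0 c| =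
        |c.1| ^ j1 * |c.2| ^ j2 / (Real.sqrt (c.1 ^ 2 + c.2 ^ 2)) ^ j0 := by
      rw [gfun, if_neg hc, abs_div, abs_mul, abs_pow, abs_pow, abs_pow, abs_of_pos hr]
    rw [hb]
    have h1 : |c.1| ≤ ‖c‖ := by simpa [Real.norm_eq_abs] using norm_fst_le c
    have h2 : |c.2| ≤ ‖c‖ := by simpa [Real.norm_eq_abs] using norm_snd_le c
    have key : |c.1| ^ j1 * |c.2| ^ j2 / (Real.sqrt (c.1 ^ 2 + c.2 ^ 2)) ^ j0 ≤
        ‖c‖ ^ j1 * ‖c‖ ^ j2 / ‖c‖ ^ j0 := by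
      gcongr
      case _ => exact norm_le_sqrt c
    refine key.trans (le_of_eq ?_)
    rw [← pow_add, pow_sub₀ _ hc0.ne' h, div_eq_mul_inv]

lemma gfun_cont (j1 j2 j0 : ℕ) (h : j0 + 1 ≤ j1 + j2) : Continuous (gfun j1 j2 j0) := by
  rw [continuous_iff_continuousAt]
  intro c
  by_cases hc : c = 0
  · subst hc
    rw [ContinuousAt, gfun_zero]
    apply squeeze_zero_norm (fun x => by
      simpa [Real.norm_eq_abs] using gfun_le j1 j2 j0 (by omega) x)
    have : Continuous fun x : ℝ × ℝ => ‖x‖ ^ (j1 + j2 - j0) := by fun_prop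
    have h0 : (fun x : ℝ × ℝ => ‖x‖ ^ (j1 + j2 - j0)) 0 = 0 := by
      simp [zero_pow (by omega : j1 + j2 - j0 ≠ 0)]
    exact this.tendsto' 0 0 h0
  · have hq : 0 < c.1 ^ 2 + c.2 ^ 2 := qpos hc
    have hcont : ContinuousAt
        (fun x : ℝ × ℝ => x.1 ^ j1 * x.2 ^ j2 / (Real.sqrt (x.1 ^ 2 + x.2 ^ 2)) ^ j0) c := by
      apply ContinuousAt.div
      · fun_prop
      · fun_prop
      · exact pow_ne_zero _ (Real.sqrt_pos.mpr hq).ne'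
    apply hcont.congr
    filter_upwards [isOpen_compl_singleton.mem_nhds hc] with x hx
    simp only [gfun, if_neg (by simpa using hx)]

lemma hasFDerivAt_gfun_zero (j1 j2 j0 : ℕ) (h : j0 + 2 ≤ j1 + j2) :
    HasFDerivAt (gfun j1 j2 j0) (0 : ℝ × ℝ →L[ℝ] ℝ) 0 := by
  rw [hasFDerivAt_iff_isLittleO_nhds_zero]
  simp only [zero_add, gfun_zero, ContinuousLinearMap.zero_apply, sub_zero]
  have hlit : (fun x : ℝ × ℝ => ‖x‖ ^ 2) =o[nhds 0] (fun x : ℝ × ℝ => x) :=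
    isLittleO_norm_pow_id one_lt_two
  refine IsBigO.trans_isLittleO ?_ hlit
  rw [isBigO_iff]
  refine ⟨1, ?_⟩
  filter_upwards [Metric.ball_mem_nhds (0 : ℝ × ℝ) one_pos] with x hx
  rw [mem_ball_zero_iff] at hx
  have h1 : ‖gfun j1 j2 j0 x‖ ≤ ‖x‖ ^ (j1 + j2 - j0) := by
    simpa [Real.norm_eq_abs] using gfun_le j1 j2 j0 (by omega) x
  have h2 : ‖x‖ ^ (j1 + j2 - j0) ≤ ‖x‖ ^ 2 :=
    pow_le_pow_of_le_one (norm_nonneg _) hx.le (by omega)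
  calc ‖gfun j1 j2 j0 x‖ ≤ ‖x‖ ^ 2 := h1.trans h2
    _ ≤ 1 * ‖‖x‖ ^ 2‖ := by rw [one_mul, Real.norm_eq_abs, abs_of_nonneg (by positivity)]

lemma hasFDerivAt_gfun_ne (j1 j2 j0 : ℕ) {c : ℝ × ℝ} (hc : c ≠ 0) :
    HasFDerivAt (gfun j1 j2 j0) (Dg j1 j2 j0 c) c := by
  have hq : 0 < c.1 ^ 2 + c.2 ^ 2 := qpos hc
  have hr : 0 < Real.sqrt (c.1 ^ 2 + c.2 ^ 2) := Real.sqrt_pos.mpr hq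
  have h1 : HasFDerivAt (fun x : ℝ × ℝ => x.1 ^ j1)
      (((j1 : ℝ) * c.1 ^ (j1 - 1)) • ContinuousLinearMap.fst ℝ ℝ ℝ) c :=
    (hasDerivAt_pow j1 c.1).comp_hasFDerivAt c hasFDerivAt_fst
  have h2 : HasFDerivAt (fun x : ℝ × ℝ => x.2 ^ j2)
      (((j2 : ℝ) * c.2 ^ (j2 - 1)) • ContinuousLinearMap.snd ℝ ℝ ℝ) c :=
    (hasDerivAt_pow j2 c.2).comp_hasFDerivAt c hasFDerivAt_snd
  have hN := h1.mul h2
  have hq1 : HasFDerivAt (fun x : ℝ × ℝ => x.1 ^ 2)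
      (((2 : ℝ) * c.1 ^ (2 - 1)) • ContinuousLinearMap.fst ℝ ℝ ℝ) c := by
    have := (hasDerivAt_pow 2 c.1).comp_hasFDerivAt c
      (hasFDerivAt_fst (p := c) (𝕜 := ℝ) (E := ℝ) (F := ℝ))
    simpa [Function.comp_def] using this
  have hq2 : HasFDerivAt (fun x : ℝ × ℝ => x.2 ^ 2)
      (((2 : ℝ) * c.2 ^ (2 - 1)) • ContinuousLinearMap.snd ℝ ℝ ℝ) c := by
    have := (hasDerivAt_pow 2 c.2).comp_hasFDerivAt c
      (hasFDerivAt_snd (p := c) (𝕜 := ℝ) (E := ℝ) (F := ℝ))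
    simpa [Function.comp_def] using this
  have hqd := hq1.add hq2
  have hs : HasFDerivAt (fun x : ℝ × ℝ => Real.sqrt (x.1 ^ 2 + x.2 ^ 2))
      ((1 / (2 * Real.sqrt (c.1 ^ 2 + c.2 ^ 2))) •
        (((2 : ℝ) * c.1 ^ (2 - 1)) • ContinuousLinearMap.fst ℝ ℝ ℝ +
          ((2 : ℝ) * c.2 ^ (2 - 1)) • ContinuousLinearMap.snd ℝ ℝ ℝ)) c :=
    (Real.hasDerivAt_sqrt hq.ne').comp_hasFDerivAt c hqd
  have hp := (hasDerivAt_pow j0 (Real.sqrt (c.1 ^ 2 + c.2 ^ 2))).comp_hasFDerivAt c hs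
  have hi := (hasDerivAt_inv (pow_ne_zero j0 hr.ne')).comp_hasFDerivAt c hp
  have hmain := hN.mul hi
  have hev : gfun j1 j2 j0 =ᶠ[nhds c] fun x : ℝ × ℝ =>
      (x.1 ^ j1 * x.2 ^ j2) * ((Real.sqrt (x.1 ^ 2 + x.2 ^ 2)) ^ j0)⁻¹ := by
    filter_upwards [isOpen_compl_singleton.mem_nhds hc] with x hx
    rw [gfun, if_neg (by simpa using hx), div_eq_mul_inv]
  have hfinal := hmain.congr_of_eventuallyEq hev
  refine hfinal.congr_fderiv (ContinuousLinearMap.ext fun x => ?_)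
  simp only [Dg, gfun, if_neg hc, ContinuousLinearMap.add_apply,
    ContinuousLinearMap.smul_apply, ContinuousLinearMap.coe_fst', ContinuousLinearMap.coe_snd',
    smul_eq_mul, Function.comp_apply]
  have hrne : Real.sqrt (c.1 ^ 2 + c.2 ^ 2) ≠ 0 := hr.ne'
  rcases Nat.eq_zero_or_pos j0 with rfl | h0
  · simp only [Nat.cast_zero, pow_zero, zero_mul, mul_zero, sub_zero, zero_sub, neg_mul,
      inv_one, one_mul, zero_add, pow_one, Nat.cast_ofNat]
    norm_num
    ring
  · obtain ⟨n, rfl⟩ := Nat.exists_eq_add_of_le h0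
    rw [show 1 + n - 1 = n from by omega]
    push_cast
    field_simp
    simp only [Pi.mul_apply]
    ring

lemma Dg_zero (j1 j2 j0 : ℕ) : Dg j1 j2 j0 0 = 0 := by
  simp [Dg, gfun_zero]

lemma gfun_key : ∀ k j1 j2 j0 : ℕ, j0 + k + 1 ≤ j1 + j2 →
    ContDiff ℝ (k : ℕ∞) (gfun j1 j2 j0) := by
  intro k
  induction k with
  | zero =>
    intro j1 j2 j0 h
    simpa [contDiff_zero] using (gfun_cont j1 j2 j0 (by omega))
  | succ k IH =>
    intro j1 j2 j0 h
    have hcast : (((k + 1 : ℕ) : ℕ∞) : WithTop ℕ∞) = ((k : ℕ∞) : WithTop ℕ∞) + 1 := by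
      push_cast
      rfl
    rw [hcast, contDiff_succ_iff_fderiv]
    have hdiff : Differentiable ℝ (gfun j1 j2 j0) := by
      intro c
      by_cases hc : c = 0
      · subst hc
        exact (hasFDerivAt_gfun_zero j1 j2 j0 (by omega)).differentiableAt
      · exact (hasFDerivAt_gfun_ne j1 j2 j0 hc).differentiableAt
    refine ⟨hdiff, by simp, ?_⟩
    have hfd : fderiv ℝ (gfun j1 j2 j0) = Dg j1 j2 j0 := by
      funext c
      by_cases hc : c = 0
      · subst hc
        rw [(hasFDerivAt_gfun_zero j1 j2 j0 (by omega)).fderiv, Dg_zero]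
      · exact (hasFDerivAt_gfun_ne j1 j2 j0 hc).fderiv
    rw [hfd]
    have ha : ContDiff ℝ (k : ℕ∞)
        (fun c => (j1 : ℝ) * gfun (j1 - 1) j2 j0 c - (j0 : ℝ) * gfun (j1 + 1) j2 (j0 + 2) c) := by
      apply ContDiff.sub
      · rcases Nat.eq_zero_or_pos j1 with rfl | hj1
        · simp only [Nat.cast_zero, zero_mul]
          exact contDiff_const
        · exact contDiff_const.mul (IH (j1 - 1) j2 j0 (by omega))
      · exact contDiff_const.mul (IH (j1 + 1) j2 (j0 + 2) (by omega))
    have hb : ContDiff ℝ (k : ℕ∞)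
        (fun c => (j2 : ℝ) * gfun j1 (j2 - 1) j0 c - (j0 : ℝ) * gfun j1 (j2 + 1) (j0 + 2) c) := by
      apply ContDiff.sub
      · rcases Nat.eq_zero_or_pos j2 with rfl | hj2
        · simp only [Nat.cast_zero, zero_mul]
          exact contDiff_const
        · exact contDiff_const.mul (IH j1 (j2 - 1) j0 (by omega))
      · exact contDiff_const.mul (IH j1 (j2 + 1) (j0 + 2) (by omega))
    exact (ha.smul contDiff_const).add (hb.smul contDiff_const)

theorem statement0 (j1 j2 j0 m : ℕ) (hm : 1 ≤ m) (hj : j0 + m ≤ j1 + j2) :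
    ContDiff ℝ ((m - 1 : ℕ) : ℕ∞)
      (fun c : ℝ × ℝ =>
        if c = 0 then 0
        else c.1 ^ j1 * c.2 ^ j2 / (Real.sqrt (c.1 ^ 2 + c.2 ^ 2)) ^ j0) := by
  exact gfun_key (m - 1) j1 j2 j0 (by omega)
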